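/- For finitely supported real sequences b = {b_I} and β = {β_J}, with σ independent uniform ±1 random signs, the averaged operator norm of P^{0,1}_b P^{σ,1,0}_β satisfies the exact equality ‖P^{0,1}_b P^{σ,1,0}_β‖_{E,2→2}² = sup_{J∈𝒟} β_J² [ |J|^{−1} Σ_{I∈𝒟, I⊊J} b_I² |I| + b_J² + |J| Σ_{I∈𝒟, J⊊I} b_I² / |I| ]. -/

import Mathlib

open MeasureTheory ProbabilityTheory Real Filter
open scoped ENNReal

attribute [local instance] Classical.propDecidable

noncomputable section

namespace RandomParaproducts

/-- Dyadic intervals: `(n, k)` represents `[k·2ⁿ, (k+1)·2ⁿ)`. -/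
abbrev D : Type := ℤ × ℤ

/-- The length `2ⁿ` of the dyadic interval `(n, k)`. -/
def len (I : D) : ℝ := (2 : ℝ) ^ I.1

/-- The dyadic interval `[k·2ⁿ, (k+1)·2ⁿ)` as a subset of `ℝ`. -/
def ival (I : D) : Set ℝ := Set.Ico ((I.2 : ℝ) * (2 : ℝ) ^ I.1) (((I.2 : ℝ) + 1) * (2 : ℝ) ^ I.1)

/-- The left half of a dyadic interval. -/
def lc (I : D) : D := (I.1 - 1, 2 * I.2)

/-- The right half of a dyadic interval. -/
def rc (I : D) : D := (I.1 - 1, 2 * I.2 + 1)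

/-- The `L²`-normalized Haar function `h_I = h⁰_I`. -/
def haar (I : D) : ℝ → ℝ := fun x =>
  (Real.sqrt (len I))⁻¹ *
    ((ival (rc I)).indicator (fun _ => (1 : ℝ)) x - (ival (lc I)).indicator (fun _ => (1 : ℝ)) x)

/-- The function `h¹_I = |h_I| = |I|^{-1/2} 1_I`. -/
def haar1 (I : D) : ℝ → ℝ := fun x =>
  (Real.sqrt (len I))⁻¹ * (ival I).indicator (fun _ => (1 : ℝ)) x

/-- `h^ε_I`, where `false` codes the exponent `0` and `true` codes the exponent `1`. -/
def hfun : Bool → D → ℝ → ℝ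
  | false => haar
  | true => haar1

/-- The inner product `⟨f, g⟩ = ∫ f g` on `L²(ℝ)`. -/
def ip (f g : ℝ → ℝ) : ℝ := ∫ x, f x * g x

/-- The paraproduct `P^{ε,δ}_b f = ∑_I b_I ⟨f, h^δ_I⟩ h^ε_I` with finitely supported
numerical symbol `b`. -/
def P (e d : Bool) (b : D →₀ ℝ) (f : ℝ → ℝ) : ℝ → ℝ := fun x =>
  ∑ I ∈ b.support, b I * ip f (hfun d I) * hfun e I x

/-- The signed paraproduct `P^{σ,ε,δ}_b f = ∑_I σ_I b_I ⟨f, h^δ_I⟩ h^ε_I`. -/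
def Psig (σ : D → ℝ) (e d : Bool) (b : D →₀ ℝ) (f : ℝ → ℝ) : ℝ → ℝ := fun x =>
  ∑ I ∈ b.support, σ I * (b I * ip f (hfun d I) * hfun e I x)

/-- The square of the `L²(ℝ)` norm, `‖g‖₂² = ∫ g²`. -/
def l2normSq (g : ℝ → ℝ) : ℝ := ∫ x, (g x) ^ 2

/-- The Carleson norm of a sequence `a` whose nonzero entries lie in the finite set `s`:
`sup_J (|J|⁻¹ ∑_{I ⊆ J} a_I² |I|)^{1/2}`. -/
def carlOn (s : Finset D) (a : D → ℝ) : ℝ :=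
  ⨆ J : D, Real.sqrt ((len J)⁻¹ *
    ∑ I ∈ s.filter (fun I => ival I ⊆ ival J), (a I) ^ 2 * len I)

/-- `μ` is the law of independent uniformly distributed random signs `{σ_I : I ∈ 𝒟}`. -/
def IsSignMeasure (μ : Measure (D → ℝ)) : Prop :=
  IsProbabilityMeasure μ ∧
    iIndepFun (m := fun _ : D => (inferInstance : MeasurableSpace ℝ)) (fun I σ => σ I) μ ∧
    ∀ I : D, μ.map (fun σ => σ I) =
      (2⁻¹ : ℝ≥0∞) • (Measure.dirac (1 : ℝ) + Measure.dirac (-1 : ℝ))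

/-- `f` is a unit vector of `L²(ℝ)`. -/
def UnitL2 (f : ℝ → ℝ) : Prop := MemLp f 2 volume ∧ eLpNorm f 2 volume = 1

/-- The operator norm on `L²(ℝ)` of a map defined on functions. -/
def opNorm (T : (ℝ → ℝ) → ℝ → ℝ) : ℝ :=
  ⨆ f : {f : ℝ → ℝ // UnitL2 f}, Real.sqrt (l2normSq (T f.1))

/-- The averaged operator norm `sup_{‖f‖₂ = 1} (𝔼 ‖T_σ f‖₂²)^{1/2}`. -/
def avgOpNorm (μ : Measure (D → ℝ)) (T : (D → ℝ) → (ℝ → ℝ) → ℝ → ℝ) : ℝ :=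
  ⨆ f : {f : ℝ → ℝ // UnitL2 f}, Real.sqrt (∫ σ, l2normSq (T σ f.1) ∂μ)

/-- `b` is the finite linear combination of Haar functions with coefficients `c`. -/
def FinHaar (b : ℝ → ℝ) (c : D →₀ ℝ) : Prop :=
  b = fun x => ∑ I ∈ c.support, c I * haar I x

/-- The paraproduct `P^{ε,γ}_{b,α} f = ∑_{I} (⟨b, h^α_I⟩/|I|^{1/2}) ⟨f, h^γ_I⟩ h^ε_I` with
function symbol `b`, the sum extended over a finite set `s` containing all the
nonvanishing terms. -/
def Pb (s : Finset D) (e g a : Bool) (b : ℝ → ℝ) (f : ℝ → ℝ) : ℝ → ℝ := fun x =>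
  ∑ I ∈ s, (ip b (hfun a I) / Real.sqrt (len I)) * ip f (hfun g I) * hfun e I x

lemma measurableSet_ival (I : D) : MeasurableSet (ival I) := measurableSet_Ico

lemma volume_ival_ne_top (I : D) : volume (ival I) ≠ ⊤ := by
  simp only [ival, Real.volume_Ico]; exact ENNReal.ofReal_ne_top

lemma memℒp_haar (I : D) : MemLp (haar I) 2 volume := by
  have h1 : MemLp ((ival (rc I)).indicator (fun _ => (1 : ℝ))) 2 volume :=
    memLp_indicator_const 2 (measurableSet_ival _) 1 (Or.inr (volume_ival_ne_top _))
  have h2 : MemLp ((ival (lc I)).indicator (fun _ => (1 : ℝ))) 2 volume :=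
    memLp_indicator_const 2 (measurableSet_ival _) 1 (Or.inr (volume_ival_ne_top _))
  exact ((h1.sub h2).const_mul ((Real.sqrt (len I))⁻¹))

/-- The Haar function `h_I` as an element of `L²(ℝ)`. -/
def haarLp (I : D) : Lp ℝ 2 (volume : Measure ℝ) := (memℒp_haar I).toLp (haar I)

/-- The random Haar multiplier `T_σ f = ∑_{I ∈ 𝒟} σ_I ⟨f, h_I⟩ h_I`, as an element of
`L²(ℝ)`; the (infinite) sum converges unconditionally in `L²`. -/
def Tfull (σ : D → ℝ) (g : ℝ → ℝ) : Lp ℝ 2 (volume : Measure ℝ) :=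
  ∑' I : D, (σ I * ip g (haar I)) • haarLp I

/-- The composition `M_b T_σ M_β` applied to `f`, as a function. -/
def MbTM (σ : D → ℝ) (b β f : ℝ → ℝ) : ℝ → ℝ := fun x =>
  b x * (Tfull σ fun y => β y * f y) x

section Lemmas

lemma len_pos (I : D) : 0 < len I := by unfold len; positivity

lemma zle {p q n : ℤ} (h : p ≤ q) : (p : ℝ) * 2 ^ n ≤ (q : ℝ) * 2 ^ n :=
  mul_le_mul_of_nonneg_right (by exact_mod_cast h) (by positivity)

lemma ival_cast (I : D) {n : ℤ} (h : n ≤ I.1) :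
    ival I = Set.Ico (((I.2 * 2 ^ (I.1 - n).toNat : ℤ) : ℝ) * (2 : ℝ) ^ n)
      ((((I.2 + 1) * 2 ^ (I.1 - n).toNat : ℤ) : ℝ) * (2 : ℝ) ^ n) := by
  have h2 : (2 : ℝ) ^ I.1 = ((2 ^ (I.1 - n).toNat : ℤ) : ℝ) * 2 ^ n := by
    push_cast
    rw [← zpow_natCast (2 : ℝ) (I.1 - n).toNat, Int.toNat_of_nonneg (by omega),
      ← zpow_add₀ (two_ne_zero)]
    ring_nf
  unfold ival
  rw [h2]
  congr 1 <;> push_cast <;> ring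

lemma ival_nonempty (I : D) : (ival I).Nonempty := by
  refine Set.nonempty_Ico.2 ?_
  have := len_pos I
  unfold len at this
  nlinarith

lemma ival_subset_or_disjoint {I J : D} (h : I.1 ≤ J.1) :
    ival I ⊆ ival J ∨ Disjoint (ival I) (ival J) := by
  set M : ℤ := 2 ^ (J.1 - I.1).toNat with hM
  have hMpos : 0 < M := by positivity
  have hJ := ival_cast J h
  have hI : ival I = Set.Ico ((I.2 : ℝ) * 2 ^ I.1) (((I.2 + 1 : ℤ) : ℝ) * 2 ^ I.1) := by
    unfold ival; push_cast; ring_nf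
  rcases le_or_gt (J.2 * M) I.2 with h1 | h1
  · rcases lt_or_ge I.2 ((J.2 + 1) * M) with h2 | h2
    · left
      rw [hI, hJ]
      exact Set.Ico_subset_Ico (zle h1) (zle (Int.add_one_le_iff.mpr h2))
    · right
      rw [hI, hJ]
      refine Set.disjoint_left.2 fun x hx hx' => ?_
      have hle : (((J.2 + 1) * M : ℤ) : ℝ) * 2 ^ I.1 ≤ (I.2 : ℝ) * 2 ^ I.1 := zle h2
      linarith [hx.1, hx'.2]
  · right
    rw [hI, hJ]
    refine Set.disjoint_left.2 fun x hx hx' => ?_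
    have hle : (((I.2 + 1) : ℤ) : ℝ) * 2 ^ I.1 ≤ ((J.2 * M : ℤ) : ℝ) * 2 ^ I.1 :=
      zle (Int.add_one_le_iff.mpr h1)
    linarith [hx.2, hx'.1]

lemma ival_inj {I J : D} (h : ival I = ival J) : I = J := by
  have h1 : ((I.2 : ℝ) * 2 ^ I.1 = (J.2 : ℝ) * 2 ^ J.1) ∧
      (((I.2 : ℝ) + 1) * 2 ^ I.1 = ((J.2 : ℝ) + 1) * 2 ^ J.1) := by
    rw [ival, ival] at h
    have hlt : ((I.2 : ℝ)) * 2 ^ I.1 < ((I.2 : ℝ) + 1) * 2 ^ I.1 := by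
      have := len_pos I; unfold len at this; nlinarith
    exact (Set.Ico_eq_Ico_iff (Or.inl hlt)).1 h
  have hlen : (2 : ℝ) ^ I.1 = 2 ^ J.1 := by linarith [h1.1, h1.2]
  have hn : I.1 = J.1 :=
    zpow_right_injective₀ (by norm_num : (0:ℝ) < 2) (by norm_num : (2:ℝ) ≠ 1) hlen
  have hk : I.2 = J.2 := by
    have h2 : (I.2 : ℝ) * 2 ^ I.1 = (J.2 : ℝ) * 2 ^ I.1 := by rw [h1.1, hn]
    have hpos : (0:ℝ) < 2 ^ I.1 := by positivity
    have := mul_right_cancel₀ (ne_of_gt hpos) h2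
    exact_mod_cast this
  exact Prod.ext hn hk

lemma subset_len_le {I J : D} (h : ival I ⊆ ival J) : I.1 ≤ J.1 := by
  by_contra hn
  push_neg at hn
  have hvol : volume (ival I) ≤ volume (ival J) := measure_mono h
  rw [ival, ival, Real.volume_Ico, Real.volume_Ico] at hvol
  have hI : ((I.2:ℝ) + 1) * 2 ^ I.1 - (I.2:ℝ) * 2 ^ I.1 = 2 ^ I.1 := by ring
  have hJ : ((J.2:ℝ) + 1) * 2 ^ J.1 - (J.2:ℝ) * 2 ^ J.1 = 2 ^ J.1 := by ring
  rw [hI, hJ] at hvol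
  have h2 : (2:ℝ) ^ I.1 ≤ 2 ^ J.1 := by
    have := (ENNReal.ofReal_le_ofReal_iff (by positivity)).1 hvol
    linarith
  have := (zpow_lt_zpow_iff_right₀ (by norm_num : (1:ℝ) < 2)).2 hn
  linarith

lemma subset_same_scale {I J : D} (h : ival I ⊆ ival J) (hn : I.1 = J.1) : I = J := by
  have hlt : ((I.2 : ℝ)) * 2 ^ I.1 < ((I.2 : ℝ) + 1) * 2 ^ I.1 := by
    have := len_pos I; unfold len at this; nlinarith
  rw [ival, ival] at h
  have h' := (Set.Ico_subset_Ico_iff hlt).1 h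
  have hk : I.2 = J.2 := by
    rcases h' with ⟨ha, hb⟩
    rw [← hn] at ha hb
    have hpos : (0:ℝ) < 2 ^ I.1 := by positivity
    have h1 : (J.2:ℝ) ≤ I.2 := le_of_mul_le_mul_right ha hpos
    have h2 : (I.2:ℝ) + 1 ≤ (J.2:ℝ) + 1 := le_of_mul_le_mul_right hb hpos
    have : (I.2:ℝ) = J.2 := by linarith
    exact_mod_cast this
  exact Prod.ext hn hk

lemma ssubset_scale_lt {I J : D} (h : ival I ⊂ ival J) : I.1 < J.1 := by
  rcases lt_or_eq_of_le (subset_len_le h.subset) with h' | h'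
  · exact h'
  · exact absurd (subset_same_scale h.subset h') (by intro he; rw [he] at h; exact h.ne rfl)

lemma classify (I J : D) :
    I = J ∨ ival I ⊂ ival J ∨ ival J ⊂ ival I ∨ Disjoint (ival I) (ival J) := by
  rcases le_total I.1 J.1 with h | h
  · rcases ival_subset_or_disjoint h with hs | hd
    · rcases eq_or_ne (ival I) (ival J) with he | hne
      · exact Or.inl (ival_inj he)
      · exact Or.inr (Or.inl ⟨hs, fun h' => hne (le_antisymm hs h')⟩)
    · exact Or.inr (Or.inr (Or.inr hd))
  · rcases ival_subset_or_disjoint h with hs | hd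
    · rcases eq_or_ne (ival J) (ival I) with he | hne
      · exact Or.inl (ival_inj he).symm
      · exact Or.inr (Or.inr (Or.inl ⟨hs, fun h' => hne (le_antisymm hs h')⟩))
    · exact Or.inr (Or.inr (Or.inr hd.symm))

lemma two_zpow_sub_one (n : ℤ) : (2:ℝ) ^ (n - 1) = 2 ^ n * 2⁻¹ :=
  zpow_sub_one₀ two_ne_zero n

lemma ival_lc_union_rc (I : D) : ival (lc I) ∪ ival (rc I) = ival I := by
  unfold ival lc rc
  simp only
  ext x
  simp only [Set.mem_union, Set.mem_Ico]
  push_cast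
  rw [two_zpow_sub_one]
  constructor
  · rintro (⟨ha, hb⟩ | ⟨ha, hb⟩) <;> exact ⟨by linarith, by linarith⟩
  · rintro ⟨ha, hb⟩
    rcases lt_or_ge x ((2 * (I.2:ℝ) + 1) * (2 ^ I.1 * 2⁻¹)) with h | h
    · exact Or.inl ⟨by linarith, h⟩
    · exact Or.inr ⟨by linarith, by linarith⟩

lemma lc_rc_disjoint (I : D) : Disjoint (ival (lc I)) (ival (rc I)) := by
  unfold ival lc rc
  simp only
  refine Set.disjoint_left.2 fun x hx hx' => ?_
  have h1 := hx.2
  have h2 := hx'.1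
  push_cast at h1 h2
  linarith

lemma len_lc (I : D) : len (lc I) = len I / 2 := by
  unfold len lc
  simp only
  rw [two_zpow_sub_one]
  ring

lemma len_rc (I : D) : len (rc I) = len I / 2 := by
  unfold len rc
  simp only
  rw [two_zpow_sub_one]
  ring

lemma ival_lc_subset (I : D) : ival (lc I) ⊆ ival I := by
  rw [← ival_lc_union_rc I]; exact Set.subset_union_left

lemma ival_rc_subset (I : D) : ival (rc I) ⊆ ival I := by
  rw [← ival_lc_union_rc I]; exact Set.subset_union_right

lemma volume_ival (I : D) : volume (ival I) = ENNReal.ofReal (len I) := by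
  rw [ival, Real.volume_Ico]
  congr 1
  unfold len; ring

lemma volume_ival_toReal (I : D) : (volume (ival I)).toReal = len I := by
  rw [volume_ival, ENNReal.toReal_ofReal (len_pos I).le]

lemma sqrt_len_pos (I : D) : 0 < Real.sqrt (len I) := Real.sqrt_pos.2 (len_pos I)

lemma sq_sqrt_len (I : D) : Real.sqrt (len I) * Real.sqrt (len I) = len I :=
  Real.mul_self_sqrt (len_pos I).le

lemma integral_ind_mul (s t : Set ℝ) (hs : MeasurableSet s) (ht : MeasurableSet t) :
    ∫ x, s.indicator (fun _ => (1:ℝ)) x * t.indicator (fun _ => (1:ℝ)) x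
      = (volume (s ∩ t)).toReal := by
  have hpt : ∀ x, s.indicator (fun _ => (1:ℝ)) x * t.indicator (fun _ => (1:ℝ)) x
      = (s ∩ t).indicator (fun _ => (1:ℝ)) x := by
    intro x
    by_cases hx : x ∈ s <;> by_cases hy : x ∈ t <;>
      simp [Set.indicator_apply, hx, hy, Set.mem_inter_iff]
  rw [integral_congr_ae (Eventually.of_forall hpt), integral_indicator_const (1:ℝ) (hs.inter ht)]
  simp
  rfl

lemma integral_ind (I : D) :
    ∫ x, (ival I).indicator (fun _ => (1:ℝ)) x = len I := by
  rw [integral_indicator_const (1:ℝ) (measurableSet_ival I)]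
  simp [volume_ival_toReal]
  exact volume_ival_toReal I

lemma integrable_ind (I : D) : Integrable ((ival I).indicator (fun _ => (1:ℝ))) volume := by
  rw [integrable_indicator_iff (measurableSet_ival I)]
  exact integrableOn_const (by rw [volume_ival]; exact ENNReal.ofReal_ne_top)

lemma memℒp_haar1 (I : D) : MemLp (haar1 I) 2 volume := by
  have h1 : MemLp ((ival I).indicator (fun _ => (1 : ℝ))) 2 volume :=
    memLp_indicator_const 2 (measurableSet_ival _) 1
      (Or.inr (by rw [volume_ival]; exact ENNReal.ofReal_ne_top))
  exact h1.const_mul _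

lemma memℒp_haar' (I : D) : MemLp (haar I) 2 volume := by
  have h1 : MemLp ((ival (rc I)).indicator (fun _ => (1 : ℝ))) 2 volume :=
    memLp_indicator_const 2 (measurableSet_ival _) 1
      (Or.inr (by rw [volume_ival]; exact ENNReal.ofReal_ne_top))
  have h2 : MemLp ((ival (lc I)).indicator (fun _ => (1 : ℝ))) 2 volume :=
    memLp_indicator_const 2 (measurableSet_ival _) 1
      (Or.inr (by rw [volume_ival]; exact ENNReal.ofReal_ne_top))
  exact (h1.sub h2).const_mul _

lemma integrable_L2_mul {f g : ℝ → ℝ} (hf : MemLp f 2 volume) (hg : MemLp g 2 volume) :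
    Integrable (fun x => f x * g x) volume := by
  have hint : Integrable (fun x => 2⁻¹ * (f x ^ 2 + g x ^ 2)) volume := by
    have := (hf.integrable_sq.add hg.integrable_sq).const_mul (2⁻¹ : ℝ)
    simpa using this
  refine Integrable.mono' hint (hf.1.mul hg.1) (Eventually.of_forall fun x => ?_)
  simp only [norm_mul, Real.norm_eq_abs]
  nlinarith [abs_nonneg (f x), abs_nonneg (g x), sq_abs (f x), sq_abs (g x),
    sq_nonneg (|f x| - |g x|), abs_mul_abs_self (f x), abs_mul_abs_self (g x)]

lemma ip_comm (f g : ℝ → ℝ) : ip f g = ip g f := by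
  unfold ip; simp_rw [mul_comm]

lemma ip_haar1_haar1 (I J : D) :
    ip (haar1 I) (haar1 J)
      = (volume (ival I ∩ ival J)).toReal / (Real.sqrt (len I) * Real.sqrt (len J)) := by
  unfold ip haar1
  have hpt : ∀ x, ((Real.sqrt (len I))⁻¹ * (ival I).indicator (fun _ => (1:ℝ)) x)
        * ((Real.sqrt (len J))⁻¹ * (ival J).indicator (fun _ => (1:ℝ)) x)
      = ((Real.sqrt (len I))⁻¹ * (Real.sqrt (len J))⁻¹)
        * ((ival I).indicator (fun _ => (1:ℝ)) x * (ival J).indicator (fun _ => (1:ℝ)) x) := by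
    intro x; ring
  rw [integral_congr_ae (Eventually.of_forall hpt), integral_const_mul _,
    integral_ind_mul _ _ (measurableSet_ival I) (measurableSet_ival J)]
  field_simp

lemma haar_eq_zero_outside {I : D} {x : ℝ} (hx : x ∉ ival I) : haar I x = 0 := by
  unfold haar
  rw [Set.indicator_of_notMem (fun h => hx (ival_rc_subset I h)),
    Set.indicator_of_notMem (fun h => hx (ival_lc_subset I h))]
  ring

lemma integrable_haar (I : D) : Integrable (haar I) volume := by
  unfold haar
  exact (((integrable_ind (rc I)).sub (integrable_ind (lc I))).const_mul _)

lemma integral_haar (I : D) : ∫ x, haar I x = 0 := by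
  unfold haar
  rw [integral_const_mul _, integral_sub (integrable_ind (rc I)) (integrable_ind (lc I)),
    integral_ind, integral_ind, len_rc, len_lc]
  ring

lemma ip_haar_haar (I J : D) : ip (haar I) (haar J) = if I = J then 1 else 0 := by
  have key : ∀ K L : D, ival K ⊂ ival L → ip (haar K) (haar L) = 0 := by
    intro K L hKL
    have hscale : K.1 ≤ L.1 - 1 := by have := ssubset_scale_lt hKL; omega
    have hhalf : ival K ⊆ ival (lc L) ∨ ival K ⊆ ival (rc L) := by
      rcases ival_subset_or_disjoint (show K.1 ≤ (lc L).1 from hscale) with h | h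
      · exact Or.inl h
      rcases ival_subset_or_disjoint (show K.1 ≤ (rc L).1 from hscale) with h' | h'
      · exact Or.inr h'
      exfalso
      obtain ⟨x, hx⟩ := ival_nonempty K
      have hxL : x ∈ ival L := hKL.subset hx
      rw [← ival_lc_union_rc L] at hxL
      rcases hxL with h'' | h''
      · exact (Set.disjoint_left.1 h) hx h''
      · exact (Set.disjoint_left.1 h') hx h''
    obtain ⟨c, hc⟩ : ∃ c : ℝ, ∀ x ∈ ival K, haar L x = c := by
      rcases hhalf with h | h
      · refine ⟨-(Real.sqrt (len L))⁻¹, fun x hx => ?_⟩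
        unfold haar
        rw [Set.indicator_of_mem (h hx), Set.indicator_of_notMem
          (Set.disjoint_left.1 (lc_rc_disjoint L) (h hx))]
        ring
      · refine ⟨(Real.sqrt (len L))⁻¹, fun x hx => ?_⟩
        unfold haar
        rw [Set.indicator_of_mem (h hx), Set.indicator_of_notMem
          (Set.disjoint_left.1 (lc_rc_disjoint L).symm (h hx))]
        ring
    have hpt : ∀ x, haar K x * haar L x = c * haar K x := by
      intro x
      by_cases hx : x ∈ ival K
      · rw [hc x hx]; ring
      · rw [haar_eq_zero_outside hx]; ring
    unfold ip
    rw [integral_congr_ae (Eventually.of_forall hpt), integral_const_mul _, integral_haar]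
    ring
  rcases classify I J with h | h | h | h
  · subst h
    rw [if_pos rfl]
    unfold ip haar
    have hpt : ∀ x, ((Real.sqrt (len I))⁻¹ *
          ((ival (rc I)).indicator (fun _ => (1:ℝ)) x - (ival (lc I)).indicator (fun _ => (1:ℝ)) x))
        * ((Real.sqrt (len I))⁻¹ *
          ((ival (rc I)).indicator (fun _ => (1:ℝ)) x - (ival (lc I)).indicator (fun _ => (1:ℝ)) x))
        = (len I)⁻¹ * ((ival (rc I)).indicator (fun _ => (1:ℝ)) x
            + (ival (lc I)).indicator (fun _ => (1:ℝ)) x) := by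
      intro x
      have hinv : (Real.sqrt (len I))⁻¹ * (Real.sqrt (len I))⁻¹ = (len I)⁻¹ := by
        rw [← mul_inv, sq_sqrt_len]
      by_cases h1 : x ∈ ival (rc I)
      · have h2 : x ∉ ival (lc I) := Set.disjoint_left.1 (lc_rc_disjoint I).symm h1
        rw [Set.indicator_of_mem h1, Set.indicator_of_notMem h2]
        rw [← hinv]; ring
      · by_cases h2 : x ∈ ival (lc I)
        · rw [Set.indicator_of_notMem h1, Set.indicator_of_mem h2, ← hinv]; ring
        · rw [Set.indicator_of_notMem h1, Set.indicator_of_notMem h2]; ring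
    rw [integral_congr_ae (Eventually.of_forall hpt), integral_const_mul _,
      integral_add (integrable_ind (rc I)) (integrable_ind (lc I)), integral_ind, integral_ind,
      len_rc, len_lc]
    have h12 : len I / 2 + len I / 2 = len I := by ring
    rw [h12, inv_mul_cancel₀ (len_pos I).ne']
  · rw [if_neg (fun he => (he ▸ h).ne rfl), key I J h]
  · rw [if_neg (fun he => (he ▸ h).ne rfl), ip_comm, key J I h]
  · have hne : I ≠ J := by
      obtain ⟨x, hx⟩ := ival_nonempty I
      exact fun he => (Set.disjoint_left.1 h) hx (he ▸ hx)
    rw [if_neg hne]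
    unfold ip
    have hpt : ∀ x, haar I x * haar J x = 0 := by
      intro x
      by_cases hx : x ∈ ival I
      · rw [haar_eq_zero_outside (Set.disjoint_left.1 h hx)]; ring
      · rw [haar_eq_zero_outside hx]; ring
    rw [integral_congr_ae (Eventually.of_forall hpt)]
    simp

lemma ip_sum_sum {s t : Finset D} (g h : D → ℝ → ℝ)
    (hg : ∀ J ∈ s, MemLp (g J) 2 volume) (hh : ∀ K ∈ t, MemLp (h K) 2 volume) :
    ip (fun x => ∑ J ∈ s, g J x) (fun x => ∑ K ∈ t, h K x)
      = ∑ J ∈ s, ∑ K ∈ t, ip (g J) (h K) := by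
  unfold ip
  have hpt : ∀ x, (∑ J ∈ s, g J x) * (∑ K ∈ t, h K x)
      = ∑ J ∈ s, ∑ K ∈ t, g J x * h K x := by
    intro x; rw [Finset.sum_mul_sum]
  rw [integral_congr_ae (Eventually.of_forall hpt),
    integral_finset_sum _ (fun J hJ =>
      integrable_finset_sum _ (fun K hK => integrable_L2_mul (hg J hJ) (hh K hK)))]
  exact Finset.sum_congr rfl fun J hJ =>
    integral_finset_sum _ (fun K hK => integrable_L2_mul (hg J hJ) (hh K hK))

lemma ip_const_mul (a c : ℝ) (u v : ℝ → ℝ) :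
    ip (fun x => a * u x) (fun x => c * v x) = a * c * ip u v := by
  unfold ip
  have hpt : ∀ x, (a * u x) * (c * v x) = (a * c) * (u x * v x) := fun x => by ring
  rw [integral_congr_ae (Eventually.of_forall hpt), integral_const_mul _]

lemma ip_scaled_haar_sum {s : Finset D} (u v : D → ℝ) :
    ip (fun x => ∑ I ∈ s, u I * haar I x) (fun x => ∑ I ∈ s, v I * haar I x)
      = ∑ I ∈ s, u I * v I := by
  rw [ip_sum_sum (fun I x => u I * haar I x) (fun I x => v I * haar I x)
    (fun I _ => (memℒp_haar' I).const_mul _) (fun I _ => (memℒp_haar' I).const_mul _)]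
  refine Finset.sum_congr rfl fun J hJ => ?_
  rw [Finset.sum_eq_single_of_mem J hJ]
  · rw [ip_const_mul, ip_haar_haar, if_pos rfl, mul_one]
  · intro K _ hne
    rw [ip_const_mul, ip_haar_haar, if_neg (fun h => hne h.symm), mul_zero]

lemma l2normSq_eq_ip (g : ℝ → ℝ) : l2normSq g = ip g g := by
  unfold l2normSq ip
  exact integral_congr_ae (Eventually.of_forall fun x => by ring)

lemma wsq_cases (J I : D) :
    (ip (haar1 J) (haar1 I)) ^ 2 =
      (if ival I ⊂ ival J then len I / len J else 0)
      + (if I = J then 1 else 0)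
      + (if ival J ⊂ ival I then len J / len I else 0) := by
  have hlI := len_pos I
  have hlJ := len_pos J
  rcases classify I J with h | h | h | h
  · subst h
    rw [ip_haar1_haar1, Set.inter_self, volume_ival_toReal, if_pos rfl,
      if_neg (fun h' => ssubset_irrefl _ h'), div_pow, mul_pow, Real.sq_sqrt hlI.le]
    rw [pow_two, div_self (mul_pos hlI hlI).ne']
    norm_num
  · have hIJ : I ≠ J := fun he => (he ▸ h).ne rfl
    rw [ip_haar1_haar1, if_pos h, if_neg hIJ, if_neg (fun h' => ssubset_irrefl _ (h.trans h')),
      Set.inter_eq_right.2 h.subset, volume_ival_toReal, div_pow, mul_pow,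
      Real.sq_sqrt hlJ.le, Real.sq_sqrt hlI.le]
    rw [add_zero, add_zero, div_eq_div_iff (by positivity) hlJ.ne']
    ring
  · have hIJ : I ≠ J := fun he => (he ▸ h).ne rfl
    rw [ip_haar1_haar1, if_pos h, if_neg hIJ, if_neg (fun h' => ssubset_irrefl _ (h.trans h')),
      Set.inter_eq_left.2 h.subset, volume_ival_toReal, div_pow, mul_pow,
      Real.sq_sqrt hlJ.le, Real.sq_sqrt hlI.le]
    rw [zero_add, zero_add, div_eq_div_iff (by positivity) hlI.ne']
    ring
  · obtain ⟨x, hx⟩ := ival_nonempty I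
    have hIJ : I ≠ J := fun he => (Set.disjoint_left.1 h) hx (he ▸ hx)
    have h1 : ¬ ival I ⊂ ival J := fun h' => (Set.disjoint_left.1 h) hx (h'.subset hx)
    have h2 : ¬ ival J ⊂ ival I := fun h' => by
      obtain ⟨y, hy⟩ := ival_nonempty J
      exact (Set.disjoint_left.1 h (h'.subset hy)) hy
    rw [ip_haar1_haar1, Set.disjoint_iff_inter_eq_empty.1 h.symm, if_neg h1, if_neg hIJ,
      if_neg h2]
    simp


section Sign

variable {μ : Measure (D → ℝ)}

lemma sign_ae (hμ : IsSignMeasure μ) (J : D) : ∀ᵐ σ ∂μ, σ J = 1 ∨ σ J = -1 := by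
  have hmeas : Measurable fun σ : D → ℝ => σ J := measurable_pi_apply J
  have hs : MeasurableSet ({1, -1} : Set ℝ) :=
    (measurableSet_singleton _).union (measurableSet_singleton _)
  have h0 : μ.map (fun σ => σ J) ({1, -1} : Set ℝ)ᶜ = 0 := by
    rw [hμ.2.2 J]
    simp [Measure.smul_apply, Measure.add_apply, Measure.dirac_apply]
  rw [Measure.map_apply hmeas hs.compl] at h0
  have hae : ∀ᵐ σ ∂μ, σ J ∈ ({1, -1} : Set ℝ) := by
    rw [ae_iff]
    exact h0
  filter_upwards [hae] with σ h
  simpa using h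

lemma sign_integrable (hμ : IsSignMeasure μ) (J : D) : Integrable (fun σ => σ J) μ := by
  have : IsProbabilityMeasure μ := hμ.1
  refine Integrable.mono' (integrable_const (1:ℝ))
    (measurable_pi_apply J).aestronglyMeasurable ?_
  filter_upwards [sign_ae hμ J] with σ h
  rcases h with h | h <;> rw [Real.norm_eq_abs, h] <;> norm_num

lemma sign_mul_integrable (hμ : IsSignMeasure μ) (J K : D) :
    Integrable (fun σ => σ J * σ K) μ := by
  have : IsProbabilityMeasure μ := hμ.1
  refine Integrable.mono' (integrable_const (1:ℝ))
    (((measurable_pi_apply J).mul (measurable_pi_apply K)).aestronglyMeasurable) ?_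
  filter_upwards [sign_ae hμ J, sign_ae hμ K] with σ h1 h2
  rw [Real.norm_eq_abs, abs_mul]
  rcases h1 with h | h <;> rcases h2 with h' | h' <;> rw [h, h'] <;> norm_num

lemma integrable_dirac'' {f : ℝ → ℝ} (hf : Measurable f) (a : ℝ) :
    Integrable f (Measure.dirac a) :=
  (integrable_const (f a)).congr (ae_eq_dirac f).symm

lemma sign_integral (hμ : IsSignMeasure μ) (J : D) : ∫ σ, σ J ∂μ = 0 := by
  have h : ∫ σ, σ J ∂μ = ∫ x, x ∂(μ.map (fun σ => σ J)) :=
    (integral_map (φ := fun σ : D → ℝ => σ J) (f := fun x : ℝ => x)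
      (measurable_pi_apply J).aemeasurable measurable_id.aestronglyMeasurable).symm
  have hid : Measurable (fun x : ℝ => x) := measurable_id
  rw [h, hμ.2.2 J, integral_smul_measure,
    integral_add_measure (integrable_dirac'' hid 1) (integrable_dirac'' hid (-1)),
    integral_dirac, integral_dirac]
  norm_num

lemma sign_sq_integral (hμ : IsSignMeasure μ) (J : D) : ∫ σ, σ J * σ J ∂μ = 1 := by
  have h : ∫ σ, σ J * σ J ∂μ = ∫ x, x * x ∂(μ.map (fun σ => σ J)) :=
    (integral_map (φ := fun σ : D → ℝ => σ J) (f := fun x : ℝ => x * x)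
      (measurable_pi_apply J).aemeasurable
      (measurable_id.mul measurable_id).aestronglyMeasurable).symm
  have hid : Measurable (fun x : ℝ => x * x) := measurable_id.mul measurable_id
  rw [h, hμ.2.2 J, integral_smul_measure,
    integral_add_measure (integrable_dirac'' hid 1) (integrable_dirac'' hid (-1)),
    integral_dirac, integral_dirac]
  norm_num

lemma sign_pair (hμ : IsSignMeasure μ) (J K : D) :
    ∫ σ, σ J * σ K ∂μ = if J = K then 1 else 0 := by
  split_ifs with h
  · subst h; exact sign_sq_integral hμ J
  · have hind : IndepFun (fun σ : D → ℝ => σ J) (fun σ => σ K) μ := hμ.2.1.indepFun h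
    have := IndepFun.integral_mul_eq_mul_integral hind (sign_integrable hμ J).1 (sign_integrable hμ K).1
    calc ∫ σ, σ J * σ K ∂μ
        = ∫ σ, (((fun τ : D → ℝ => τ J) * (fun τ : D → ℝ => τ K)) σ) ∂μ := rfl
      _ = (∫ σ, σ J ∂μ) * ∫ σ, σ K ∂μ := this
      _ = 0 := by rw [sign_integral hμ J, zero_mul]

end Sign

section Norms

lemma integral_sq_eq_norm {f : ℝ → ℝ} (hf : MemLp f 2 volume) :
    ∫ x, f x ^ 2 = ((eLpNorm f 2 volume).toReal) ^ 2 := by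
  set F := hf.toLp f with hF
  have hae : (F : ℝ → ℝ) =ᵐ[volume] f := hf.coeFn_toLp
  have h1 : ∫ x, f x ^ 2 = ∫ x, (F : ℝ → ℝ) x * (F : ℝ → ℝ) x := by
    refine integral_congr_ae ?_
    filter_upwards [hae] with x hx
    rw [hx, pow_two]
  have h2 : ∫ x, (F : ℝ → ℝ) x * (F : ℝ → ℝ) x = @inner ℝ _ _ F F := by
    rw [MeasureTheory.L2.inner_def]
    refine integral_congr_ae (Eventually.of_forall fun x => ?_)
    simp [RCLike.inner_apply]
    ring
  rw [h1, h2, real_inner_self_eq_norm_sq, Lp.norm_toLp _ hf]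

lemma eLpNorm_eq_one_of_integral_sq {f : ℝ → ℝ} (hf : MemLp f 2 volume)
    (h : ∫ x, f x ^ 2 = 1) : eLpNorm f 2 volume = 1 := by
  rw [integral_sq_eq_norm hf] at h
  have h0 : (0:ℝ) ≤ (eLpNorm f 2 volume).toReal := ENNReal.toReal_nonneg
  have h1 : (eLpNorm f 2 volume).toReal = 1 := by nlinarith
  exact (ENNReal.toReal_eq_one_iff _).1 h1

lemma integral_sq_of_unit {f : ℝ → ℝ} (hf : MemLp f 2 volume)
    (h : eLpNorm f 2 volume = 1) : ∫ x, f x ^ 2 = 1 := by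
  rw [integral_sq_eq_norm hf, h]
  norm_num

lemma eLpNorm_haar_one (J : D) : eLpNorm (haar J) 2 volume = 1 := by
  refine eLpNorm_eq_one_of_integral_sq (memℒp_haar' J) ?_
  have := ip_haar_haar J J
  rw [if_pos rfl] at this
  unfold ip at this
  rw [← this]
  exact integral_congr_ae (Eventually.of_forall fun x => by ring)

lemma bessel {f : ℝ → ℝ} (hf : MemLp f 2 volume) (s : Finset D) :
    ∑ J ∈ s, (ip f (haar J)) ^ 2 ≤ ∫ x, f x ^ 2 := by
  set c : D → ℝ := fun J => ip f (haar J) with hc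
  set g : ℝ → ℝ := fun x => ∑ J ∈ s, c J * haar J x with hg
  have hgm : MemLp g 2 volume := by
    have h := memLp_finset_sum' s (fun J _ => (memℒp_haar' J).const_mul (c J))
    convert h using 1
    ext x
    rw [hg]
    simp
  have hfg : ∫ x, f x * g x = ∑ J ∈ s, c J ^ 2 := by
    have hpt : ∀ x, f x * g x = ∑ J ∈ s, c J * (f x * haar J x) := by
      intro x
      rw [hg, Finset.mul_sum]
      exact Finset.sum_congr rfl fun J _ => by ring
    rw [integral_congr_ae (Eventually.of_forall hpt),
      integral_finset_sum _ (fun J _ => (integrable_L2_mul hf (memℒp_haar' J)).const_mul (c J))]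
    refine Finset.sum_congr rfl fun J _ => ?_
    rw [integral_const_mul _, pow_two]
    rfl
  have hgg : ∫ x, g x * g x = ∑ J ∈ s, c J ^ 2 := by
    have := ip_scaled_haar_sum (s := s) c c
    unfold ip at this
    rw [this]
    exact Finset.sum_congr rfl fun J _ => (pow_two (c J)).symm
  have hnn : 0 ≤ ∫ x, (f x - g x) ^ 2 := integral_nonneg fun x => sq_nonneg _
  have hexp : ∫ x, (f x - g x) ^ 2
      = (∫ x, f x ^ 2) - 2 * (∫ x, f x * g x) + ∫ x, g x * g x := by
    have hpt : ∀ x, (f x - g x) ^ 2 = (f x ^ 2 - 2 * (f x * g x)) + g x * g x :=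
      fun x => by ring
    have hB : Integrable (fun x => 2 * (f x * g x)) volume :=
      (integrable_L2_mul hf hgm).const_mul 2
    have hA : Integrable (fun x => f x ^ 2 - 2 * (f x * g x)) volume :=
      hf.integrable_sq.sub hB
    rw [integral_congr_ae (Eventually.of_forall hpt), integral_add hA (integrable_L2_mul hgm hgm),
      integral_sub hf.integrable_sq hB, integral_const_mul _]
  rw [hexp, hfg, hgg] at hnn
  linarith

end Norms

-- appended to geom.lean before "end Lemmas"

lemma S_formula (b β : D →₀ ℝ) {μ : Measure (D → ℝ)} (hμ : IsSignMeasure μ)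
    {f : ℝ → ℝ} (hf : MemLp f 2 volume) :
    ∫ σ, l2normSq (P false true b (Psig σ true false β f)) ∂μ
      = ∑ J ∈ β.support, (β J) ^ 2 * (ip f (haar J)) ^ 2
          * (∑ I ∈ b.support, (b I) ^ 2 * (ip (haar1 J) (haar1 I)) ^ 2) := by
  set c : D → ℝ := fun J => ip f (haar J) with hc
  set w : D → D → ℝ := fun J I => ip (haar1 J) (haar1 I) with hw
  set G : D → ℝ → ℝ := fun J => fun x => ∑ I ∈ b.support, (b I * w J I) * haar I x with hG
  have hGm : ∀ J, MemLp (G J) 2 volume := by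
    intro J
    have h := memLp_finset_sum' b.support
      (fun I (_ : I ∈ b.support) => (memℒp_haar' I).const_mul (b I * w J I))
    convert h using 1
    ext x
    simp [hG]
  have hstep : ∀ σ : D → ℝ, P false true b (Psig σ true false β f)
      = fun x => ∑ J ∈ β.support, (σ J * (β J * c J)) * G J x := by
    intro σ
    funext x
    show ∑ I ∈ b.support, b I * ip (Psig σ true false β f) (hfun true I) * hfun false I x = _
    have hip : ∀ I : D, ip (Psig σ true false β f) (haar1 I)
        = ∑ J ∈ β.support, (σ J * (β J * c J)) * w J I := by
      intro I
      unfold ip Psig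
      have hpt : ∀ y, (∑ J ∈ β.support, σ J * (β J * ip f (hfun false J) * hfun true J y))
            * haar1 I y
          = ∑ J ∈ β.support, (σ J * (β J * c J)) * (haar1 J y * haar1 I y) := by
        intro y
        rw [Finset.sum_mul]
        refine Finset.sum_congr rfl fun J _ => ?_
        show σ J * (β J * ip f (haar J) * haar1 J y) * haar1 I y = _
        rw [hc]
        ring
      rw [integral_congr_ae (Eventually.of_forall hpt),
        integral_finset_sum _ (fun J _ =>
          (integrable_L2_mul (memℒp_haar1 J) (memℒp_haar1 I)).const_mul _)]
      refine Finset.sum_congr rfl fun J _ => ?_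
      rw [integral_const_mul _]
      rfl
    calc ∑ I ∈ b.support, b I * ip (Psig σ true false β f) (hfun true I) * hfun false I x
        = ∑ I ∈ b.support, ∑ J ∈ β.support,
            (σ J * (β J * c J)) * ((b I * w J I) * haar I x) := by
          refine Finset.sum_congr rfl fun I _ => ?_
          show b I * ip (Psig σ true false β f) (haar1 I) * haar I x = _
          rw [hip I, Finset.mul_sum, Finset.sum_mul]
          exact Finset.sum_congr rfl fun J _ => by ring
      _ = ∑ J ∈ β.support, (σ J * (β J * c J)) * G J x := by
          rw [Finset.sum_comm]
          refine Finset.sum_congr rfl fun J _ => ?_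
          rw [hG, Finset.mul_sum]
  have hB : ∀ σ : D → ℝ, l2normSq (fun x => ∑ J ∈ β.support, (σ J * (β J * c J)) * G J x)
      = ∑ J ∈ β.support, ∑ K ∈ β.support,
          (σ J * σ K) * ((β J * c J) * (β K * c K) * ip (G J) (G K)) := by
    intro σ
    rw [l2normSq_eq_ip, ip_sum_sum _ _ (fun J _ => (hGm J).const_mul _)
      (fun K _ => (hGm K).const_mul _)]
    refine Finset.sum_congr rfl fun J _ => Finset.sum_congr rfl fun K _ => ?_
    rw [ip_const_mul]
    ring
  have he : ∀ σ : D → ℝ, l2normSq (P false true b (Psig σ true false β f))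
      = ∑ J ∈ β.support, ∑ K ∈ β.support,
          (σ J * σ K) * ((β J * c J) * (β K * c K) * ip (G J) (G K)) := by
    intro σ
    rw [hstep σ, hB σ]
  calc ∫ σ, l2normSq (P false true b (Psig σ true false β f)) ∂μ
      = ∫ σ, ∑ J ∈ β.support, ∑ K ∈ β.support,
          (σ J * σ K) * ((β J * c J) * (β K * c K) * ip (G J) (G K)) ∂μ :=
        integral_congr_ae (Eventually.of_forall he)
    _ = ∑ J ∈ β.support, ∑ K ∈ β.support,
          ∫ σ, (σ J * σ K) * ((β J * c J) * (β K * c K) * ip (G J) (G K)) ∂μ := by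
        rw [integral_finset_sum _ (fun J _ => integrable_finset_sum _
          (fun K _ => (sign_mul_integrable hμ J K).mul_const _))]
        exact Finset.sum_congr rfl fun J _ => integral_finset_sum _
          (fun K _ => (sign_mul_integrable hμ J K).mul_const _)
    _ = ∑ J ∈ β.support, ∑ K ∈ β.support,
          (if J = K then (1:ℝ) else 0) * ((β J * c J) * (β K * c K) * ip (G J) (G K)) := by
        refine Finset.sum_congr rfl fun J _ => Finset.sum_congr rfl fun K _ => ?_
        rw [integral_mul_const, sign_pair hμ J K]
    _ = ∑ J ∈ β.support, (β J) ^ 2 * (ip f (haar J)) ^ 2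
          * (∑ I ∈ b.support, (b I) ^ 2 * (ip (haar1 J) (haar1 I)) ^ 2) := by
        refine Finset.sum_congr rfl fun J hJ => ?_
        rw [Finset.sum_eq_single_of_mem J hJ]
        · rw [if_pos rfl, one_mul]
          have hGJ : ip (G J) (G J) = ∑ I ∈ b.support, (b I * w J I) * (b I * w J I) :=
            ip_scaled_haar_sum _ _
          rw [hGJ, Finset.mul_sum, Finset.mul_sum]
          exact Finset.sum_congr rfl fun I _ => by rw [hw]; ring
        · intro K _ hne
          rw [if_neg (fun h => hne h.symm), zero_mul]

lemma K_eq_bracket (b : D →₀ ℝ) (J : D) :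
    ∑ I ∈ b.support, (b I) ^ 2 * (ip (haar1 J) (haar1 I)) ^ 2
      = (len J)⁻¹ * (∑ I ∈ b.support.filter (fun I => ival I ⊂ ival J), (b I) ^ 2 * len I)
        + (b J) ^ 2
        + len J * ∑ I ∈ b.support.filter (fun I => ival J ⊂ ival I), (b I) ^ 2 / len I := by
  have expand : ∀ I : D, (b I) ^ 2 * (ip (haar1 J) (haar1 I)) ^ 2
      = (if ival I ⊂ ival J then (len J)⁻¹ * ((b I) ^ 2 * len I) else 0)
        + (if I = J then (b I) ^ 2 else 0)
        + (if ival J ⊂ ival I then len J * ((b I) ^ 2 / len I) else 0) := by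
    intro I
    rw [wsq_cases, mul_add, mul_add]
    congr 1
    · congr 1
      · split_ifs with h
        · rw [div_eq_mul_inv]; ring
        · exact mul_zero _
      · split_ifs with h
        · exact mul_one _
        · exact mul_zero _
    · split_ifs with h
      · rw [div_eq_mul_inv, div_eq_mul_inv]; ring
      · exact mul_zero _
  rw [Finset.sum_congr rfl (fun I _ => expand I), Finset.sum_add_distrib, Finset.sum_add_distrib]
  congr 1
  · congr 1
    · rw [← Finset.sum_filter, Finset.mul_sum]
    · by_cases hJs : J ∈ b.support
      · rw [Finset.sum_eq_single_of_mem J hJs (fun K _ hne => if_neg hne), if_pos rfl]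
      · rw [Finset.sum_eq_zero (fun I hI => if_neg (fun (h : I = J) => hJs (h ▸ hI))),
          Finsupp.notMem_support_iff.1 hJs]
        ring
  · rw [← Finset.sum_filter, Finset.mul_sum]


end Lemmas

/-- Exact formula for the square of the averaged operator norm of
`P^{0,1}_b P^{σ,1,0}_β`. -/
theorem statement14 (b β : D →₀ ℝ) (μ : Measure (D → ℝ)) (hμ : IsSignMeasure μ) :
    (avgOpNorm μ (fun σ f => P false true b (Psig σ true false β f))) ^ 2 =
      ⨆ J : D, (β J) ^ 2 *
        ((len J)⁻¹ * (∑ I ∈ b.support.filter (fun I => ival I ⊂ ival J), (b I) ^ 2 * len I)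
          + (b J) ^ 2
          + len J * ∑ I ∈ b.support.filter (fun I => ival J ⊂ ival I), (b I) ^ 2 / len I) := by
  classical
  set w : D → ℝ := fun J =>
    (β J) ^ 2 * (∑ I ∈ b.support, (b I) ^ 2 * (ip (haar1 J) (haar1 I)) ^ 2) with hwdef
  have hwnn : ∀ J, 0 ≤ w J := fun J => mul_nonneg (sq_nonneg _)
    (Finset.sum_nonneg fun I _ => mul_nonneg (sq_nonneg _) (sq_nonneg _))
  have hRHS : (⨆ J : D, (β J) ^ 2 *
        ((len J)⁻¹ * (∑ I ∈ b.support.filter (fun I => ival I ⊂ ival J), (b I) ^ 2 * len I)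
          + (b J) ^ 2
          + len J * ∑ I ∈ b.support.filter (fun I => ival J ⊂ ival I), (b I) ^ 2 / len I))
      = ⨆ J : D, w J := by
    refine iSup_congr fun J => ?_
    rw [hwdef, ← K_eq_bracket b J]
  rw [hRHS]
  obtain ⟨J0, hJ0mem, hJ0max⟩ := Finset.exists_max_image (insert ((0,0) : D) β.support) w
    ⟨(0,0), Finset.mem_insert_self _ _⟩
  have hmax : ∀ J : D, w J ≤ w J0 := by
    intro J
    by_cases hJ : J ∈ insert ((0,0) : D) β.support
    · exact hJ0max J hJ
    · have hβJ : β J = 0 :=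
        Finsupp.notMem_support_iff.1 (fun hm => hJ (Finset.mem_insert_of_mem hm))
      have : w J = 0 := by rw [hwdef]; simp [hβJ]
      rw [this]
      exact hwnn J0
  have hSf : ∀ f : {f : ℝ → ℝ // UnitL2 f},
      ∫ σ, l2normSq (P false true b (Psig σ true false β f.1)) ∂μ
        = ∑ J ∈ β.support, (β J) ^ 2 * (ip f.1 (haar J)) ^ 2
            * (∑ I ∈ b.support, (b I) ^ 2 * (ip (haar1 J) (haar1 I)) ^ 2) :=
    fun f => S_formula b β hμ f.2.1
  have hSnn : ∀ f : {f : ℝ → ℝ // UnitL2 f},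
      0 ≤ ∫ σ, l2normSq (P false true b (Psig σ true false β f.1)) ∂μ := by
    intro f
    rw [hSf f]
    exact Finset.sum_nonneg fun J _ => mul_nonneg (mul_nonneg (sq_nonneg _) (sq_nonneg _))
      (Finset.sum_nonneg fun I _ => mul_nonneg (sq_nonneg _) (sq_nonneg _))
  have hSle : ∀ f : {f : ℝ → ℝ // UnitL2 f},
      ∫ σ, l2normSq (P false true b (Psig σ true false β f.1)) ∂μ ≤ w J0 := by
    intro f
    rw [hSf f]
    have h1 : ∀ J ∈ β.support, (β J) ^ 2 * (ip f.1 (haar J)) ^ 2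
        * (∑ I ∈ b.support, (b I) ^ 2 * (ip (haar1 J) (haar1 I)) ^ 2)
        ≤ (ip f.1 (haar J)) ^ 2 * w J0 := by
      intro J _
      have : (β J) ^ 2 * (ip f.1 (haar J)) ^ 2
          * (∑ I ∈ b.support, (b I) ^ 2 * (ip (haar1 J) (haar1 I)) ^ 2)
          = (ip f.1 (haar J)) ^ 2 * w J := by rw [hwdef]; ring
      rw [this]
      exact mul_le_mul_of_nonneg_left (hmax J) (sq_nonneg _)
    calc ∑ J ∈ β.support, (β J) ^ 2 * (ip f.1 (haar J)) ^ 2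
          * (∑ I ∈ b.support, (b I) ^ 2 * (ip (haar1 J) (haar1 I)) ^ 2)
        ≤ ∑ J ∈ β.support, (ip f.1 (haar J)) ^ 2 * w J0 := Finset.sum_le_sum h1
      _ = (∑ J ∈ β.support, (ip f.1 (haar J)) ^ 2) * w J0 := by rw [← Finset.sum_mul]
      _ ≤ 1 * w J0 := by
          refine mul_le_mul_of_nonneg_right ?_ (hwnn J0)
          calc ∑ J ∈ β.support, (ip f.1 (haar J)) ^ 2 ≤ ∫ x, f.1 x ^ 2 := bessel f.2.1 _
            _ = 1 := integral_sq_of_unit f.2.1 f.2.2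
      _ = w J0 := one_mul _
  have hne : Nonempty {f : ℝ → ℝ // UnitL2 f} :=
    ⟨⟨haar ((0,0) : D), memℒp_haar' _, eLpNorm_haar_one _⟩⟩
  unfold avgOpNorm
  by_cases hw0 : w J0 = 0
  · have hallzero : ∀ f : {f : ℝ → ℝ // UnitL2 f},
        Real.sqrt (∫ σ, l2normSq (P false true b (Psig σ true false β f.1)) ∂μ) = 0 := by
      intro f
      have h0 : ∫ σ, l2normSq (P false true b (Psig σ true false β f.1)) ∂μ = 0 :=
        le_antisymm (hw0 ▸ hSle f) (hSnn f)
      rw [h0, Real.sqrt_zero]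
    rw [iSup_congr hallzero, ciSup_const]
    have hallzero' : ∀ J : D, w J = 0 := fun J => le_antisymm (hw0 ▸ hmax J) (hwnn J)
    rw [iSup_congr hallzero', ciSup_const]
    norm_num
  · have hβJ0 : β J0 ≠ 0 := by
      intro h0
      apply hw0
      rw [hwdef]
      simp [h0]
    have hJ0supp : J0 ∈ β.support := Finsupp.mem_support_iff.2 hβJ0
    set f0 : {f : ℝ → ℝ // UnitL2 f} := ⟨haar J0, memℒp_haar' J0, eLpNorm_haar_one J0⟩ with hf0def
    have hf0 : ∫ σ, l2normSq (P false true b (Psig σ true false β f0.1)) ∂μ = w J0 := by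
      rw [hSf f0]
      rw [Finset.sum_eq_single_of_mem J0 hJ0supp]
      · have h1 : ip f0.1 (haar J0) = 1 := by
          show ip (haar J0) (haar J0) = 1
          rw [ip_haar_haar, if_pos rfl]
        rw [h1, hwdef]
        ring
      · intro K _ hne
        have h0 : ip f0.1 (haar K) = 0 := by
          show ip (haar J0) (haar K) = 0
          rw [ip_haar_haar, if_neg (fun h => hne h.symm)]
        rw [h0]
        ring
    have hsup : (⨆ f : {f : ℝ → ℝ // UnitL2 f},
        Real.sqrt (∫ σ, l2normSq (P false true b (Psig σ true false β f.1)) ∂μ))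
        = Real.sqrt (w J0) := by
      apply le_antisymm
      · exact ciSup_le fun f => Real.sqrt_le_sqrt (hSle f)
      · have hb : BddAbove (Set.range fun f : {f : ℝ → ℝ // UnitL2 f} =>
            Real.sqrt (∫ σ, l2normSq (P false true b (Psig σ true false β f.1)) ∂μ)) := by
          refine ⟨Real.sqrt (w J0), ?_⟩
          rintro y ⟨f, rfl⟩
          exact Real.sqrt_le_sqrt (hSle f)
        calc Real.sqrt (w J0)
            = Real.sqrt (∫ σ, l2normSq (P false true b (Psig σ true false β f0.1)) ∂μ) := by
              rw [hf0]
          _ ≤ _ := le_ciSup hb f0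
    rw [hsup, Real.sq_sqrt (hwnn J0)]
    apply le_antisymm
    · exact le_ciSup (⟨w J0, by rintro y ⟨J, rfl⟩; exact hmax J⟩ :
        BddAbove (Set.range fun J : D => w J)) J0
    · exact ciSup_le hmax


end RandomParaproducts
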